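/- In the standard juggling state graph G_{h,f}, the state ω₀ with ones in positions 1,...,h−f and zeros in positions h−f+1,...,h (the 'ground state') has weight Δ(ω₀) = (f+1)^{h−f}, and this is the maximum of Δ over all landing states in {0,1}^h with exactly f zeros; hence the ground state is the most likely state in the stationary distribution. -/

import Mathlib

open Finset
open scoped Classical

/-- Stirling numbers of the second kind. -/
def stirling : ℕ → ℕ → ℕ
  | 0, 0 => 1
  | 0, _ + 1 => 0
  | _ + 1, 0 => 0
  | n + 1, k + 1 => (k + 1) * stirling n (k + 1) + stirling n k

/-- Bell numbers. -/
def bellNum (n : ℕ) : ℕ := ∑ k ∈ Finset.range (n + 1), stirling n k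

/-- A TL-state of length `h`: `ν t = 0` means no ball lands at (1-based) time `t+1`;
otherwise `ν t` is the airtime of the ball landing at time `t+1`, which must be `≥ t+1`,
and no two balls were thrown at the same instant. -/
def IsTL (h : ℕ) (ν : Fin h → Fin (h + 1)) : Prop :=
  (∀ t : Fin h, (ν t : ℕ) = 0 ∨ t.val + 1 ≤ (ν t : ℕ)) ∧
  ∀ j k : Fin h, j ≠ k → (ν j : ℕ) ≠ 0 → (ν k : ℕ) ≠ 0 →
    (ν j : ℕ) + k.val ≠ (ν k : ℕ) + j.val

/-- Number of empty slots of a TL-state. -/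
def tlZeros {h : ℕ} (ν : Fin h → Fin (h + 1)) : ℕ :=
  (Finset.univ.filter (fun t : Fin h => (ν t : ℕ) = 0)).card

/-- Number of zeros of a landing state. -/
def numZeros {h : ℕ} (ν : Fin h → Bool) : ℕ :=
  (Finset.univ.filter (fun t : Fin h => ν t = false)).card

/-- `φ_t(ν)` (with `t : Fin h` representing 1-based time `t+1`). -/
def phi {h : ℕ} (ν : Fin h → Bool) (t : Fin h) : ℕ :=
  if ν t = true then
    (Finset.univ.filter (fun j : Fin h => t < j ∧ ν j = false)).card
  else 0

/-- The weight `Δ(ν)`. -/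
def Delta {h : ℕ} (ν : Fin h → Bool) : ℕ := ∏ t : Fin h, (1 + phi ν t)

/-- 1-based access to a landing state, `false` out of range (convention `ν_t = 0` for `t > h`). -/
def getB {h : ℕ} (ν : Fin h → Bool) (j : ℕ) : Bool :=
  if hj : 1 ≤ j ∧ j ≤ h then ν ⟨j - 1, by omega⟩ else false

/-- Throwing operator on landing states: `theta 0` is the left shift (wait), and for
`1 ≤ j`, `theta j` shifts left and places a ball at 1-based position `j`. -/
def theta {h : ℕ} (j : ℕ) (ν : Fin h → Bool) : Fin h → Bool :=
  fun t => if t.val + 1 = j then true else getB ν (t.val + 2)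

/-- 1-based access to a TL-state given as a ℕ-valued tuple, `0` out of range. -/
def getN {h : ℕ} (ν : Fin h → ℕ) (j : ℕ) : ℕ :=
  if hj : 1 ≤ j ∧ j ≤ h then ν ⟨j - 1, by omega⟩ else 0

/-- Throwing operator on ℕ-valued TL-states. -/
def thetaN {h : ℕ} (j : ℕ) (ν : Fin h → ℕ) : Fin h → ℕ :=
  fun t => if t.val + 1 = j then j else getN ν (t.val + 2)

/-- Transition probabilities for the standard juggling chain on landing states. -/
noncomputable def pStd (h f : ℕ) (ν ω : Fin h → Bool) : ℝ :=
  if getB ν 1 = false then (if ω = theta 0 ν then 1 else 0)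
  else if ∃ j, 1 ≤ j ∧ j ≤ h ∧ getB ν (j + 1) = false ∧ ω = theta j ν then
    1 / ((f : ℝ) + 1)
  else 0

/-- The set of landing states with exactly `f` zeros. -/
noncomputable def States (h f : ℕ) : Finset (Fin h → Bool) :=
  Finset.univ.filter (fun ν => numZeros ν = f)

/-- The set of TL-states with exactly `f` empty slots. -/
noncomputable def TLStates (h f : ℕ) : Finset (Fin h → Fin (h + 1)) :=
  Finset.univ.filter (fun ν => IsTL h ν ∧ tlZeros ν = f)

/-- Projection from TL-states to landing states. -/
def proj {h : ℕ} (ν : Fin h → Fin (h + 1)) : Fin h → Bool :=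
  fun t => decide ((ν t : ℕ) ≠ 0)

/-- Transition probabilities for the TL-state chain. -/
noncomputable def pHat (h f : ℕ) (μ ν : Fin h → Fin (h + 1)) : ℝ :=
  if getN (h := h) (fun s => (μ s : ℕ)) 1 = 0 then
    (if (fun s => (ν s : ℕ)) = thetaN 0 (fun s => (μ s : ℕ)) then 1 else 0)
  else if ∃ j, 1 ≤ j ∧ j ≤ h ∧ getN (h := h) (fun s => (μ s : ℕ)) (j + 1) = 0 ∧
      (fun s => (ν s : ℕ)) = thetaN j (fun s => (μ s : ℕ)) then
    1 / ((f : ℝ) + 1)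
  else 0


lemma card_ge_filter (h a : ℕ) :
    (Finset.univ.filter (fun j : Fin h => a ≤ j.val)).card = h - a := by
  rcases lt_or_ge a h with hah | hah
  · have : (Finset.univ.filter (fun j : Fin h => a ≤ j.val)) = Finset.Ici ⟨a, hah⟩ := by
      ext j; simp [Fin.le_def]
    rw [this, Fin.card_Ici]
  · have : (Finset.univ.filter (fun j : Fin h => a ≤ j.val)) = ∅ := by
      ext j; simp; omega
    rw [this]; simp; omega

lemma prod_ite_pow {h : ℕ} (p : Fin h → Prop) [DecidablePred p] (c : ℕ) :
    (∏ t : Fin h, (if p t then c else 1)) = c ^ (Finset.univ.filter p).card := by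
  rw [Finset.prod_ite, Finset.prod_const, Finset.prod_const, one_pow, mul_one]

/-- The ground state (ones in positions `1,…,h−f`) has weight `(f+1)^{h−f}`, which is the
maximum weight among landing states with `f` zeros. -/
theorem stmt17 (h f : ℕ) (hf : f ≤ h) :
    Delta (fun t : Fin h => decide (t.val + 1 ≤ h - f)) = (f + 1) ^ (h - f) ∧
    ∀ ν : Fin h → Bool, numZeros ν = f → Delta ν ≤ (f + 1) ^ (h - f) := by
  have key : ∀ ν : Fin h → Bool, Delta ν = ∏ t : Fin h, (1 + phi ν t) := fun _ => rfl
  constructor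
  · set ν : Fin h → Bool := fun t : Fin h => decide (t.val + 1 ≤ h - f) with hν
    rw [key]
    have hfac : ∀ t : Fin h, 1 + phi ν t = if t.val + 1 ≤ h - f then f + 1 else 1 := by
      intro t
      unfold phi
      by_cases ht : t.val + 1 ≤ h - f
      · have hνt : ν t = true := by simp [hν, ht]; omega
        rw [if_pos hνt, if_pos ht]
        have : (Finset.univ.filter (fun j : Fin h => t < j ∧ ν j = false))
            = Finset.univ.filter (fun j : Fin h => h - f ≤ j.val) := by
          ext j
          simp only [Finset.mem_filter, Finset.mem_univ, true_and, hν,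
            decide_eq_false_iff_not, not_le, Fin.lt_def]
          omega
        rw [this, card_ge_filter]
        omega
      · have hνt : ν t = false := by simp [hν, ht]; omega
        rw [if_neg (by simp [hνt]), if_neg ht]
    calc ∏ t : Fin h, (1 + phi ν t)
        = ∏ t : Fin h, (if t.val + 1 ≤ h - f then f + 1 else 1) := by
          exact Finset.prod_congr rfl fun t _ => hfac t
      _ = (f + 1) ^ (Finset.univ.filter (fun t : Fin h => t.val + 1 ≤ h - f)).card :=
          prod_ite_pow _ _
      _ = (f + 1) ^ (h - f) := by
          congr 1
          have heq : (Finset.univ.filter (fun t : Fin h => t.val + 1 ≤ h - f))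
              = Finset.univ.filter (fun t : Fin h => ¬ (h - f ≤ t.val)) := by
            ext t; simp; omega
          have hsum := Finset.card_filter_add_card_filter_not
            (p := fun t : Fin h => h - f ≤ t.val) (s := (Finset.univ : Finset (Fin h)))
          simp only [Finset.card_univ, Fintype.card_fin] at hsum
          rw [card_ge_filter] at hsum
          rw [heq]
          omega
  · intro ν hz
    rw [key]
    have htrue : (Finset.univ.filter (fun t : Fin h => ν t = true)).card = h - f := by
      have := Finset.card_filter_add_card_filter_not
        (p := fun t : Fin h => ν t = true) (s := (Finset.univ : Finset (Fin h)))
      simp only [Finset.card_univ, Fintype.card_fin] at this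
      have hneg : (Finset.univ.filter (fun t : Fin h => ¬ ν t = true)).card = f := by
        rw [← hz]; unfold numZeros; congr 1; ext t; simp
      omega
    calc ∏ t : Fin h, (1 + phi ν t)
        ≤ ∏ t : Fin h, (if ν t = true then f + 1 else 1) := by
          apply Finset.prod_le_prod'
          intro t _
          by_cases ht : ν t = true
          · rw [if_pos ht]
            unfold phi
            rw [if_pos ht]
            have : (Finset.univ.filter (fun j : Fin h => t < j ∧ ν j = false)).card
                ≤ (Finset.univ.filter (fun j : Fin h => ν j = false)).card := by
              apply Finset.card_le_card
              intro j hj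
              simp only [Finset.mem_filter] at hj ⊢
              exact ⟨hj.1, hj.2.2⟩
            have hzz : (Finset.univ.filter (fun j : Fin h => ν j = false)).card = f := hz
            omega
          · rw [if_neg ht]
            unfold phi
            rw [if_neg ht]
      _ = (f + 1) ^ (h - f) := by rw [prod_ite_pow, htrue]
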